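/- Let V be a separable Hilbert space, and suppose A ∈ B(V^N, V^m) has the weighted robust null space property over V of order (k,w) with constants 0 < ρ < 1 and γ > 0. Then for all x, z ∈ V^N, ‖z − x‖_{2;V} ≤ ((1+ρ)²/(1−ρ)) · (1/√k) · (2σ_k(x)_{1,w;V} + ‖z‖_{1,w;V} − ‖x‖_{1,w;V}) + ((3+ρ)γ/(1−ρ)) ‖A(z−x)‖_{2;V}. -/

import Mathlib

/-- The `ℓ²`-norm of a `V`-valued vector: `‖x‖_{2;V} = (∑ i ‖x i‖²)^{1/2}`. -/
noncomputable def l2norm {ι : Type*} [Fintype ι] {V : Type*} [NormedAddCommGroup V]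
    (x : ι → V) : ℝ := Real.sqrt (∑ i, ‖x i‖ ^ 2)

/-- The weighted `ℓ¹_w`-norm of a `V`-valued vector: `‖x‖_{1,w;V} = ∑ i w i ‖x i‖`. -/
noncomputable def l1wnorm {ι : Type*} [Fintype ι] {V : Type*} [NormedAddCommGroup V]
    (w : ι → ℝ) (x : ι → V) : ℝ := ∑ i, w i * ‖x i‖

/-- Weighted best `(k,w)`-term approximation error in the `ℓ¹_w`-norm:
`σ_k(x)_{1,w;V} = inf { ‖x − x_S‖_{1,w;V} : |S|_w ≤ k }`. -/
noncomputable def sigmaK {ι : Type*} [Fintype ι] [DecidableEq ι] {V : Type*} [NormedAddCommGroup V]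
    (k : ℝ) (w : ι → ℝ) (x : ι → V) : ℝ :=
  sInf {r : ℝ | ∃ S : Finset ι, (∑ i ∈ S, w i ^ 2) ≤ k ∧
    r = l1wnorm w fun i => if i ∈ S then 0 else x i}

/-- The weighted robust null space property over `V` of order `(k,w)` with
constants `ρ` and `γ`. -/
def wRNSP {N m : ℕ} {V : Type*} [NormedAddCommGroup V] [InnerProductSpace ℂ V]
    (A : (Fin N → V) →L[ℂ] (Fin m → V)) (k : ℝ) (w : Fin N → ℝ) (ρ γ : ℝ) : Prop :=
  ∀ (x : Fin N → V) (S : Finset (Fin N)), (∑ i ∈ S, w i ^ 2) ≤ k →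
    l2norm (fun i => if i ∈ S then x i else 0) ≤
      ρ * l1wnorm w (fun i => if i ∈ S then 0 else x i) / Real.sqrt k +
        γ * l2norm (A x)


section helpers

variable {N : ℕ} {V : Type*} [NormedAddCommGroup V]

lemma l1w_ite_comp (w : Fin N → ℝ) (f : Fin N → V) (S : Finset (Fin N)) :
    l1wnorm w (fun i => if i ∈ S then 0 else f i) = ∑ i ∈ Sᶜ, w i * ‖f i‖ := by
  have h : ∀ i : Fin N, w i * ‖if i ∈ S then (0:V) else f i‖
      = if i ∈ Sᶜ then w i * ‖f i‖ else 0 := by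
    intro i; by_cases hi : i ∈ S <;> simp [hi]
  simp only [l1wnorm, h, Finset.sum_ite_mem, Finset.univ_inter]

lemma l2_ite (f : Fin N → V) (S : Finset (Fin N)) :
    l2norm (fun i => if i ∈ S then f i else 0) = Real.sqrt (∑ i ∈ S, ‖f i‖ ^ 2) := by
  have h : ∀ i : Fin N, ‖if i ∈ S then f i else (0:V)‖ ^ 2
      = if i ∈ S then ‖f i‖ ^ 2 else 0 := by
    intro i; by_cases hi : i ∈ S <;> simp [hi]
  simp only [l2norm, h, Finset.sum_ite_mem, Finset.univ_inter]

lemma sqrt_add_le (a b : ℝ) (ha : 0 ≤ a) (hb : 0 ≤ b) :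
    Real.sqrt (a + b) ≤ Real.sqrt a + Real.sqrt b := by
  have h1 : a + b ≤ (Real.sqrt a + Real.sqrt b) ^ 2 := by
    nlinarith [Real.sq_sqrt ha, Real.sq_sqrt hb, Real.sqrt_nonneg a, Real.sqrt_nonneg b]
  calc Real.sqrt (a + b) ≤ Real.sqrt ((Real.sqrt a + Real.sqrt b) ^ 2) := Real.sqrt_le_sqrt h1
    _ = Real.sqrt a + Real.sqrt b := Real.sqrt_sq (by positivity)

lemma sum_mul_le_sqrt (S : Finset (Fin N)) (w : Fin N → ℝ) (hw : ∀ i, 0 ≤ w i) (f : Fin N → V) :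
    ∑ i ∈ S, w i * ‖f i‖ ≤ Real.sqrt (∑ i ∈ S, w i ^ 2) * Real.sqrt (∑ i ∈ S, ‖f i‖ ^ 2) := by
  have h0 : (0:ℝ) ≤ ∑ i ∈ S, w i * ‖f i‖ :=
    Finset.sum_nonneg fun i _ => mul_nonneg (hw i) (norm_nonneg _)
  have hcs := Finset.sum_mul_sq_le_sq_mul_sq S w (fun i => ‖f i‖)
  calc ∑ i ∈ S, w i * ‖f i‖ = Real.sqrt ((∑ i ∈ S, w i * ‖f i‖) ^ 2) := (Real.sqrt_sq h0).symm
    _ ≤ Real.sqrt ((∑ i ∈ S, w i ^ 2) * ∑ i ∈ S, ‖f i‖ ^ 2) := Real.sqrt_le_sqrt hcs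
    _ = _ := Real.sqrt_mul (Finset.sum_nonneg fun i _ => sq_nonneg _) _

lemma stechkin_rec (w r : Fin N → ℝ) :
    ∀ (T : Finset (Fin N)) (k : ℝ), 0 ≤ k →
      ∃ S ⊆ T, (∑ i ∈ S, w i ^ 2) ≤ k ∧
        (S = T ∨ ∃ m ∈ T, m ∉ S ∧ (∀ j ∈ T, j ∉ S → r j ≤ r m) ∧
          (∀ i ∈ S, r m ≤ r i) ∧ k < ∑ i ∈ insert m S, w i ^ 2) := by
  intro T
  induction T using Finset.strongInduction with
  | _ T ih =>
    intro k hk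
    rcases T.eq_empty_or_nonempty with rfl | hT
    · exact ⟨∅, Finset.Subset.refl _, by simpa, Or.inl rfl⟩
    obtain ⟨i0, hi0T, hi0max⟩ := T.exists_max_image r hT
    by_cases hcase : w i0 ^ 2 ≤ k
    · obtain ⟨S', hS'sub, hS'w, hS'alt⟩ :=
        ih (T.erase i0) (Finset.erase_ssubset hi0T) (k - w i0 ^ 2) (by linarith)
      have hi0S' : i0 ∉ S' := fun hmem => (Finset.notMem_erase i0 T) (hS'sub hmem)
      refine ⟨insert i0 S', ?_, ?_, ?_⟩
      · intro a ha
        rcases Finset.mem_insert.mp ha with rfl | ha'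
        · exact hi0T
        · exact Finset.mem_of_mem_erase (hS'sub ha')
      · rw [Finset.sum_insert hi0S']; linarith
      · rcases hS'alt with heq | ⟨m, hmT, hmS', hmmax, hmlow, hmsum⟩
        · left; rw [heq, Finset.insert_erase hi0T]
        · right
          have hmne : m ≠ i0 := Finset.ne_of_mem_erase hmT
          have hmT' : m ∈ T := Finset.mem_of_mem_erase hmT
          refine ⟨m, hmT', ?_, ?_, ?_, ?_⟩
          · simp only [Finset.mem_insert]; push_neg; exact ⟨hmne, hmS'⟩
          · intro j hjT hjS
            have hj1 : j ≠ i0 := fun hj => hjS (hj ▸ Finset.mem_insert_self i0 S')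
            exact hmmax j (Finset.mem_erase.mpr ⟨hj1, hjT⟩)
              (fun hj => hjS (Finset.mem_insert_of_mem hj))
          · intro i hi
            rcases Finset.mem_insert.mp hi with rfl | hi'
            · exact hi0max m hmT'
            · exact hmlow i hi'
          · have hmins : m ∉ insert i0 S' := by
              simp only [Finset.mem_insert]; push_neg; exact ⟨hmne, hmS'⟩
            have hi0ins : i0 ∉ insert m S' := by
              simp only [Finset.mem_insert]; push_neg
              exact ⟨fun hh => hmne hh.symm, hi0S'⟩
            have : insert m (insert i0 S') = insert i0 (insert m S') :=
              Finset.insert_comm m i0 S'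
            rw [this, Finset.sum_insert hi0ins]; linarith
    · push_neg at hcase
      refine ⟨∅, Finset.empty_subset _, by simpa, Or.inr
        ⟨i0, hi0T, Finset.notMem_empty _, fun j hj _ => hi0max j hj,
          fun i hi => absurd hi (Finset.notMem_empty _), by simpa using hcase⟩⟩

lemma stechkin (w : Fin N → ℝ) (hw : ∀ i, 0 < w i) (k : ℝ) (hk : 0 < k) (v : Fin N → V) :
    ∃ S : Finset (Fin N), (∑ i ∈ S, w i ^ 2) ≤ k ∧
      Real.sqrt (∑ i ∈ Sᶜ, ‖v i‖ ^ 2) ≤ (∑ i, w i * ‖v i‖) / Real.sqrt k := by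
  set L : ℝ := ∑ i, w i * ‖v i‖ with hL
  have hL0 : 0 ≤ L := Finset.sum_nonneg fun i _ => mul_nonneg (hw i).le (norm_nonneg _)
  have hsk : (0:ℝ) < Real.sqrt k := Real.sqrt_pos.mpr hk
  obtain ⟨S, hSsub, hSw, halt⟩ := stechkin_rec w (fun i => ‖v i‖ / w i) Finset.univ k hk.le
  refine ⟨S, hSw, ?_⟩
  rcases halt with heq | ⟨m, -, hmS, hmmax, hmlow, hmsum⟩
  · have : Sᶜ = ∅ := by rw [heq]; simp
    rw [this]; simp [div_nonneg hL0 hsk.le]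
  · set t : ℝ := ‖v m‖ / w m with ht
    have ht0 : 0 ≤ t := div_nonneg (norm_nonneg _) (hw m).le
    -- tail bound: ∑_{Sᶜ} ‖v i‖² ≤ t * L
    have hA : ∑ i ∈ Sᶜ, ‖v i‖ ^ 2 ≤ t * L := by
      have step1 : ∑ i ∈ Sᶜ, ‖v i‖ ^ 2 ≤ ∑ i ∈ Sᶜ, t * (w i * ‖v i‖) := by
        apply Finset.sum_le_sum
        intro i hi
        have hri : ‖v i‖ / w i ≤ t :=
          hmmax i (Finset.mem_univ i) (Finset.mem_compl.mp hi)
        have : ‖v i‖ ^ 2 = (‖v i‖ / w i) * (w i * ‖v i‖) := by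
          field_simp [(hw i).ne']
        rw [this]
        exact mul_le_mul_of_nonneg_right hri (mul_nonneg (hw i).le (norm_nonneg _))
      have step2 : ∑ i ∈ Sᶜ, t * (w i * ‖v i‖) ≤ t * L := by
        rw [← Finset.mul_sum]
        apply mul_le_mul_of_nonneg_left _ ht0
        exact Finset.sum_le_sum_of_subset_of_nonneg (Finset.subset_univ _)
          (fun i _ _ => mul_nonneg (hw i).le (norm_nonneg _))
      linarith
    -- k * t ≤ L
    have hB : k * t ≤ L := by
      have h1 : ∑ i ∈ insert m S, w i ^ 2 * t ≤ ∑ i ∈ insert m S, w i * ‖v i‖ := by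
        apply Finset.sum_le_sum
        intro i hi
        have hti : t ≤ ‖v i‖ / w i := by
          rcases Finset.mem_insert.mp hi with rfl | hi'
          · exact le_refl _
          · exact hmlow i hi'
        have : w i ^ 2 * t ≤ w i ^ 2 * (‖v i‖ / w i) :=
          mul_le_mul_of_nonneg_left hti (sq_nonneg _)
        calc w i ^ 2 * t ≤ w i ^ 2 * (‖v i‖ / w i) := this
          _ = w i * ‖v i‖ := by field_simp [(hw i).ne']
      have h2 : ∑ i ∈ insert m S, w i * ‖v i‖ ≤ L :=
        Finset.sum_le_sum_of_subset_of_nonneg (Finset.subset_univ _)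
          (fun i _ _ => mul_nonneg (hw i).le (norm_nonneg _))
      have h3 : k * t ≤ (∑ i ∈ insert m S, w i ^ 2) * t :=
        mul_le_mul_of_nonneg_right hmsum.le ht0
      rw [← Finset.sum_mul] at h1
      linarith
    -- combine
    have hfin : ∑ i ∈ Sᶜ, ‖v i‖ ^ 2 ≤ (L / Real.sqrt k) ^ 2 := by
      have : (L / Real.sqrt k) ^ 2 = L ^ 2 / k := by
        rw [div_pow, Real.sq_sqrt hk.le]
      rw [this]
      rw [le_div_iff₀ hk]
      nlinarith
    calc Real.sqrt (∑ i ∈ Sᶜ, ‖v i‖ ^ 2) ≤ Real.sqrt ((L / Real.sqrt k) ^ 2) :=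
        Real.sqrt_le_sqrt hfin
      _ = L / Real.sqrt k := Real.sqrt_sq (div_nonneg hL0 hsk.le)

end helpers
set_option maxHeartbeats 1000000 in
/-- Weighted rNSP implies the `ℓ²` distance bound. -/
theorem wRNSP_l2_distance_bound {V : Type*} [NormedAddCommGroup V]
    [InnerProductSpace ℂ V] [CompleteSpace V] {N m : ℕ}
    (A : (Fin N → V) →L[ℂ] (Fin m → V)) (k : ℝ) (hk : 0 < k)
    (w : Fin N → ℝ) (hw : ∀ i, 0 < w i)
    (ρ γ : ℝ) (hρ0 : 0 < ρ) (hρ1 : ρ < 1) (hγ : 0 < γ)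
    (h : wRNSP A k w ρ γ) (x z : Fin N → V) :
    l2norm (z - x) ≤
      (1 + ρ) ^ 2 / (1 - ρ) / Real.sqrt k *
          (2 * sigmaK k w x + l1wnorm w z - l1wnorm w x) +
        (3 + ρ) * γ / (1 - ρ) * l2norm (A (z - x)) := by
  classical
  have hsk : (0:ℝ) < Real.sqrt k := Real.sqrt_pos.mpr hk
  have h1ρ : (0:ℝ) < 1 - ρ := by linarith
  set v : Fin N → V := z - x with hv
  have hvapp : ∀ i, v i = z i - x i := fun _ => rfl
  have he0 : (0:ℝ) ≤ l2norm (A v) := by simp only [l2norm]; positivity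
  set L : ℝ := ∑ i, w i * ‖v i‖ with hLdef
  have hL0 : (0:ℝ) ≤ L :=
    Finset.sum_nonneg fun i _ => mul_nonneg (hw i).le (norm_nonneg _)
  -- Step 1: ℓ² bounded by ℓ¹ via the Stechkin-type bound and the rNSP
  have H1 : Real.sqrt k * l2norm v ≤ (1 + ρ) * L + Real.sqrt k * (γ * l2norm (A v)) := by
    obtain ⟨S0, hS0k, hS0tail⟩ := stechkin w hw k hk v
    have hrnsp0 := h v S0 hS0k
    rw [l2_ite, l1w_ite_comp] at hrnsp0
    have hb0 : ∑ i ∈ S0ᶜ, w i * ‖v i‖ ≤ L :=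
      Finset.sum_le_sum_of_subset_of_nonneg (Finset.subset_univ _)
        (fun i _ _ => mul_nonneg (hw i).le (norm_nonneg _))
    have hsplit : l2norm v ≤
        Real.sqrt (∑ i ∈ S0, ‖v i‖ ^ 2) + Real.sqrt (∑ i ∈ S0ᶜ, ‖v i‖ ^ 2) := by
      have hsum : l2norm v = Real.sqrt ((∑ i ∈ S0, ‖v i‖ ^ 2) + ∑ i ∈ S0ᶜ, ‖v i‖ ^ 2) := by
        rw [l2norm, Finset.sum_add_sum_compl]
      rw [hsum]
      exact sqrt_add_le _ _ (Finset.sum_nonneg fun i _ => sq_nonneg _)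
        (Finset.sum_nonneg fun i _ => sq_nonneg _)
    have hchain : l2norm v ≤
        (ρ * (∑ i ∈ S0ᶜ, w i * ‖v i‖) / Real.sqrt k + γ * l2norm (A v)) + L / Real.sqrt k :=
      hsplit.trans (add_le_add hrnsp0 hS0tail)
    have hmul := mul_le_mul_of_nonneg_left hchain hsk.le
    have hexp : Real.sqrt k * ((ρ * (∑ i ∈ S0ᶜ, w i * ‖v i‖) / Real.sqrt k
          + γ * l2norm (A v)) + L / Real.sqrt k)
        = ρ * (∑ i ∈ S0ᶜ, w i * ‖v i‖) + Real.sqrt k * (γ * l2norm (A v)) + L := by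
      field_simp
    rw [hexp] at hmul
    linarith [mul_le_mul_of_nonneg_left hb0 hρ0.le]
  -- Step 2: the per-set bound
  have perS : ∀ S : Finset (Fin N), (∑ i ∈ S, w i ^ 2) ≤ k →
      l2norm v ≤ (1 + ρ) ^ 2 / (1 - ρ) / Real.sqrt k *
          (2 * l1wnorm w (fun i => if i ∈ S then 0 else x i) + l1wnorm w z - l1wnorm w x)
        + (3 + ρ) * γ / (1 - ρ) * l2norm (A v) := by
    intro S hSk
    rw [l1w_ite_comp]
    have hrnsp := h v S hSk
    rw [l2_ite, l1w_ite_comp] at hrnsp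
    have hcs : (∑ i ∈ S, w i * ‖v i‖) ≤ Real.sqrt k * Real.sqrt (∑ i ∈ S, ‖v i‖ ^ 2) := by
      refine (sum_mul_le_sqrt S w (fun i => (hw i).le) v).trans ?_
      exact mul_le_mul_of_nonneg_right (Real.sqrt_le_sqrt hSk) (Real.sqrt_nonneg _)
    have haS : (∑ i ∈ S, w i * ‖v i‖) ≤
        ρ * (∑ i ∈ Sᶜ, w i * ‖v i‖) + Real.sqrt k * (γ * l2norm (A v)) := by
      have h2 := mul_le_mul_of_nonneg_left hrnsp (Real.sqrt_nonneg k)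
      have hexp : Real.sqrt k * (ρ * (∑ i ∈ Sᶜ, w i * ‖v i‖) / Real.sqrt k + γ * l2norm (A v))
          = ρ * (∑ i ∈ Sᶜ, w i * ‖v i‖) + Real.sqrt k * (γ * l2norm (A v)) := by
        field_simp
      rw [hexp] at h2
      exact hcs.trans h2
    have hsplitv : (∑ i ∈ S, w i * ‖v i‖) + ∑ i ∈ Sᶜ, w i * ‖v i‖ = L :=
      Finset.sum_add_sum_compl S _
    have hsplitv' : ρ * ((∑ i ∈ S, w i * ‖v i‖) + ∑ i ∈ Sᶜ, w i * ‖v i‖) = ρ * L := by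
      rw [hsplitv]
    have hsplitx : (∑ i ∈ S, w i * ‖x i‖) + ∑ i ∈ Sᶜ, w i * ‖x i‖ = l1wnorm w x :=
      Finset.sum_add_sum_compl S _
    have hsplitz : (∑ i ∈ S, w i * ‖z i‖) + ∑ i ∈ Sᶜ, w i * ‖z i‖ = l1wnorm w z :=
      Finset.sum_add_sum_compl S _
    have t1 : (∑ i ∈ Sᶜ, w i * ‖v i‖) ≤
        (∑ i ∈ Sᶜ, w i * ‖z i‖) + ∑ i ∈ Sᶜ, w i * ‖x i‖ := by
      rw [← Finset.sum_add_distrib]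
      refine Finset.sum_le_sum fun i _ => ?_
      rw [← mul_add]
      exact mul_le_mul_of_nonneg_left (by rw [hvapp i]; exact norm_sub_le _ _) (hw i).le
    have t2 : (∑ i ∈ S, w i * ‖x i‖) ≤
        (∑ i ∈ S, w i * ‖z i‖) + ∑ i ∈ S, w i * ‖v i‖ := by
      rw [← Finset.sum_add_distrib]
      refine Finset.sum_le_sum fun i _ => ?_
      rw [← mul_add]
      refine mul_le_mul_of_nonneg_left ?_ (hw i).le
      have hx : x i = z i - v i := by rw [hvapp i]; abel
      rw [hx]
      exact norm_sub_le _ _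
    have hbound : (1 - ρ) * (∑ i ∈ Sᶜ, w i * ‖v i‖) ≤
        (l1wnorm w z - l1wnorm w x) + 2 * (∑ i ∈ Sᶜ, w i * ‖x i‖)
          + Real.sqrt k * (γ * l2norm (A v)) := by
      linarith
    have HL : (1 - ρ) * L ≤
        (1 + ρ) * ((l1wnorm w z - l1wnorm w x) + 2 * (∑ i ∈ Sᶜ, w i * ‖x i‖))
          + 2 * (Real.sqrt k * (γ * l2norm (A v))) := by
      nlinarith [mul_le_mul_of_nonneg_left haS h1ρ.le,
        mul_le_mul_of_nonneg_left hbound (by linarith : (0:ℝ) ≤ 1 + ρ), hsplitv', hsplitv]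
    have key : Real.sqrt k * (1 - ρ) * l2norm v ≤
        (1 + ρ) ^ 2 * (2 * (∑ i ∈ Sᶜ, w i * ‖x i‖) + l1wnorm w z - l1wnorm w x)
          + (3 + ρ) * γ * l2norm (A v) * Real.sqrt k := by
      nlinarith [mul_le_mul_of_nonneg_left H1 h1ρ.le,
        mul_le_mul_of_nonneg_left HL (by linarith : (0:ℝ) ≤ 1 + ρ)]
    have heq : (1 + ρ) ^ 2 / (1 - ρ) / Real.sqrt k *
          (2 * (∑ i ∈ Sᶜ, w i * ‖x i‖) + l1wnorm w z - l1wnorm w x)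
        + (3 + ρ) * γ / (1 - ρ) * l2norm (A v)
        = ((1 + ρ) ^ 2 * (2 * (∑ i ∈ Sᶜ, w i * ‖x i‖) + l1wnorm w z - l1wnorm w x)
          + (3 + ρ) * γ * l2norm (A v) * Real.sqrt k) / (Real.sqrt k * (1 - ρ)) := by
      field_simp
    rw [heq, le_div_iff₀ (mul_pos hsk h1ρ)]
    calc l2norm v * (Real.sqrt k * (1 - ρ)) = Real.sqrt k * (1 - ρ) * l2norm v := by ring
      _ ≤ _ := key
  -- Step 3: pass to the infimum
  have hc0 : (0:ℝ) < (1 + ρ) ^ 2 / (1 - ρ) / Real.sqrt k :=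
    div_pos (div_pos (by positivity) h1ρ) hsk
  have hne : {r : ℝ | ∃ S : Finset (Fin N), (∑ i ∈ S, w i ^ 2) ≤ k ∧
      r = l1wnorm w fun i => if i ∈ S then 0 else x i}.Nonempty :=
    ⟨_, ⟨∅, by simpa using hk.le, rfl⟩⟩
  have hall : ∀ r ∈ {r : ℝ | ∃ S : Finset (Fin N), (∑ i ∈ S, w i ^ 2) ≤ k ∧
      r = l1wnorm w fun i => if i ∈ S then 0 else x i},
      (l2norm v - ((1 + ρ) ^ 2 / (1 - ρ) / Real.sqrt k * (l1wnorm w z - l1wnorm w x)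
        + (3 + ρ) * γ / (1 - ρ) * l2norm (A v)))
        / (2 * ((1 + ρ) ^ 2 / (1 - ρ) / Real.sqrt k)) ≤ r := by
    rintro r ⟨S, hSk, rfl⟩
    rw [div_le_iff₀ (by linarith)]
    linarith [perS S hSk]
  have hInf := le_csInf hne hall
  rw [div_le_iff₀ (by linarith)] at hInf
  have hσ : sInf {r : ℝ | ∃ S : Finset (Fin N), (∑ i ∈ S, w i ^ 2) ≤ k ∧
      r = l1wnorm w fun i => if i ∈ S then 0 else x i} = sigmaK k w x := rfl
  rw [hσ] at hInf
  linarith [hInf]
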